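/- arXiv:1207.3269 — 3 statements merged into one kernel-verified Lean document; each statement's English description precedes it below -/
import Mathlib

section
/- Let X be a discrete random variable with values in a finite set 𝒳, and let Y ∈ 𝒴 be the output of an ε-locally-differentially-private mechanism applied to X (so that for all y and all x, x', P[Y=y|X=x] ≤ e^ε P[Y=y|X=x']). Then the mutual information satisfies I(X;Y) ≤ ε · log₂ e, i.e., I(X;Y) ≤ ε/ln 2 bits (equivalently, I(X;Y) ≤ ε nats). -/
/-- Mutual information bound for local differential privacy:
if `Y` is obtained from `X` by an ε-LDP channel `Q`, then `I(X;Y) ≤ ε·log₂ e = ε / ln 2`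
(mutual information measured in bits). The prior on `X` is `p`, the channel is `Q`. -/
theorem stmt_2 {X Y : Type*} [Fintype X] [Fintype Y]
    (ε : ℝ) (hε : 0 < ε)
    (p : X → ℝ) (hp : ∀ x, 0 ≤ p x) (hp1 : ∑ x, p x = 1)
    (Q : X → Y → ℝ) (hQ : ∀ x y, 0 ≤ Q x y) (hQ1 : ∀ x, ∑ y, Q x y = 1)
    (hdp : ∀ (y : Y) (x x' : X), Q x y ≤ Real.exp ε * Q x' y) :
    ∑ x, ∑ y, p x * Q x y *
        Real.logb 2 (p x * Q x y / (p x * ∑ x', p x' * Q x' y)) ≤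
      ε / Real.log 2 := by
  have key : ∀ x y, p x * Q x y *
      Real.logb 2 (p x * Q x y / (p x * ∑ x', p x' * Q x' y)) ≤
      p x * Q x y * (ε / Real.log 2) := by
    intro x y
    rcases eq_or_lt_of_le (mul_nonneg (hp x) (hQ x y)) with h0 | hpos
    · simp [← h0]
    · have hpx : 0 < p x := by
        by_contra hc
        push_neg at hc
        rw [le_antisymm hc (hp x), zero_mul] at hpos
        exact lt_irrefl 0 hpos
      have hQpos : 0 < Q x y := by
        by_contra hc
        push_neg at hc
        rw [le_antisymm hc (hQ x y), mul_zero] at hpos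
        exact lt_irrefl 0 hpos
      have hexp : (0:ℝ) < Real.exp ε := Real.exp_pos ε
      have hM : Q x y / Real.exp ε ≤ ∑ x', p x' * Q x' y := by
        calc Q x y / Real.exp ε = ∑ x', p x' * (Q x y / Real.exp ε) := by
              rw [← Finset.sum_mul, hp1, one_mul]
          _ ≤ ∑ x', p x' * Q x' y := by
              apply Finset.sum_le_sum
              intro x' _
              exact mul_le_mul_of_nonneg_left
                ((div_le_iff₀ hexp).2 (by rw [mul_comm]; exact hdp y x x')) (hp x')
      have hMpos : 0 < ∑ x', p x' * Q x' y :=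
        lt_of_lt_of_le (div_pos hQpos hexp) hM
      have hratio : p x * Q x y / (p x * ∑ x', p x' * Q x' y) ≤ Real.exp ε := by
        rw [mul_div_mul_left _ _ hpx.ne']
        rw [div_le_iff₀ hMpos]
        calc Q x y ≤ Real.exp ε * (Q x y / Real.exp ε) := by
              rw [mul_div_cancel₀ _ hexp.ne']
          _ ≤ Real.exp ε * ∑ x', p x' * Q x' y :=
              mul_le_mul_of_nonneg_left hM hexp.le
      have hlogb : Real.logb 2 (p x * Q x y / (p x * ∑ x', p x' * Q x' y)) ≤
          ε / Real.log 2 := by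
        calc Real.logb 2 (p x * Q x y / (p x * ∑ x', p x' * Q x' y))
            ≤ Real.logb 2 (Real.exp ε) :=
              Real.logb_le_logb_of_le one_lt_two
                (div_pos hpos (mul_pos hpx hMpos)) hratio
          _ = ε / Real.log 2 := by rw [Real.logb, Real.log_exp]
      exact mul_le_mul_of_nonneg_left hlogb hpos.le
  calc ∑ x, ∑ y, p x * Q x y *
        Real.logb 2 (p x * Q x y / (p x * ∑ x', p x' * Q x' y))
      ≤ ∑ x, ∑ y, p x * Q x y * (ε / Real.log 2) :=
        Finset.sum_le_sum fun x _ => Finset.sum_le_sum fun y _ => key x y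
    _ = ε / Real.log 2 := by
        have : ∀ x : X, ∑ y, p x * Q x y * (ε / Real.log 2)
            = p x * (ε / Real.log 2) := by
          intro x
          rw [← Finset.sum_mul, ← Finset.mul_sum, hQ1, mul_one]
        simp_rw [this, ← Finset.sum_mul, hp1, one_mul]
end

section
/- Let Z be uniform on a finite hypothesis class ℋ of size M, let d be a distance function on ℋ, fix a tolerance d₀ ≥ 0, and let M_{d₀} = max_{h∈ℋ} |{h' ∈ ℋ : d(h,h') ≤ d₀}|. For any estimator Ẑ forming a Markov chain Z → X → Ẑ, the error probability P_e := P[d(Ẑ,Z) > d₀] satisfies P_e ≥ 1 − (I(Z;X) + 1)/(log₂ M − log₂ M_{d₀}). -/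
open Finset

private lemma log_ge_one_sub_inv {x : ℝ} (hx : 0 < x) : 1 - x⁻¹ ≤ Real.log x := by
  have h := Real.log_le_sub_one_of_pos (x := x⁻¹) (by positivity)
  rw [Real.log_inv] at h
  linarith

private lemma logsum {ι : Type*} (s : Finset ι) (u v : ι → ℝ)
    (hu : ∀ i ∈ s, 0 ≤ u i) (hv : ∀ i ∈ s, 0 ≤ v i)
    (huv : ∀ i ∈ s, v i = 0 → u i = 0) :
    (∑ i ∈ s, u i) * Real.log ((∑ i ∈ s, u i) / (∑ i ∈ s, v i)) ≤
      ∑ i ∈ s, u i * Real.log (u i / v i) := by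
  set U := ∑ i ∈ s, u i with hU
  set V := ∑ i ∈ s, v i with hV
  rcases (Finset.sum_nonneg hu).eq_or_lt with h0 | hUpos
  · have hU0 : U = 0 := h0.symm
    rw [hU0, zero_mul]
    apply Finset.sum_nonneg
    intro i hi
    rw [(Finset.sum_eq_zero_iff_of_nonneg hu).mp h0.symm i hi]
    simp
  · have hUpos : 0 < U := hUpos
    have hVpos : 0 < V := by
      rcases (Finset.sum_nonneg hv).eq_or_lt with h0v | h
      · exfalso
        have hz : ∀ i ∈ s, u i = 0 := fun i hi =>
          huv i hi ((Finset.sum_eq_zero_iff_of_nonneg hv).mp h0v.symm i hi)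
        have : U = 0 := Finset.sum_eq_zero hz
        linarith
      · exact h
    have key : ∀ i ∈ s, u i - (U / V) * v i ≤ u i * (Real.log (u i / v i) - Real.log (U / V)) := by
      intro i hi
      rcases (hu i hi).eq_or_lt with h0u | hui
      · have hui0 : u i = 0 := h0u.symm
        rw [hui0]
        have hnn : 0 ≤ (U / V) * v i :=
          mul_nonneg (by positivity) (hv i hi)
        simp only [zero_mul, zero_sub]
        linarith
      · have hvi : 0 < v i := by
          rcases (hv i hi).eq_or_lt with h0v | h
          · exact absurd (huv i hi h0v.symm) (ne_of_gt hui)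
          · exact h
        have hx : 0 < (u i / v i) / (U / V) := by positivity
        have hlog := log_ge_one_sub_inv hx
        rw [Real.log_div (by positivity) (by positivity)] at hlog
        have hinv : ((u i / v i) / (U / V))⁻¹ = (v i * U) / (u i * V) := by
          field_simp
        rw [hinv] at hlog
        have hmul := mul_le_mul_of_nonneg_left hlog (le_of_lt hui)
        calc u i - (U / V) * v i = u i * (1 - (v i * U) / (u i * V)) := by
              field_simp
          _ ≤ u i * (Real.log (u i / v i) - Real.log (U / V)) := hmul
    have hsum := Finset.sum_le_sum key
    have e1 : ∑ i ∈ s, (u i - (U / V) * v i) = 0 := by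
      rw [Finset.sum_sub_distrib, ← Finset.mul_sum, ← hU, ← hV]
      field_simp; ring
    have e2 : ∑ i ∈ s, u i * (Real.log (u i / v i) - Real.log (U / V)) =
        (∑ i ∈ s, u i * Real.log (u i / v i)) - U * Real.log (U / V) := by
      simp only [mul_sub]
      rw [Finset.sum_sub_distrib, ← Finset.sum_mul, ← hU]
    rw [e1, e2] at hsum
    linarith

private lemma dpi_binary {ι : Type*} (s : Finset ι) (p q k : ι → ℝ)
    (hp : ∀ i ∈ s, 0 ≤ p i) (hq : ∀ i ∈ s, 0 ≤ q i)
    (hpq : ∀ i ∈ s, q i = 0 → p i = 0)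
    (hk0 : ∀ i ∈ s, 0 ≤ k i) (hk1 : ∀ i ∈ s, k i ≤ 1) :
    (∑ i ∈ s, p i * k i) * Real.log ((∑ i ∈ s, p i * k i) / (∑ i ∈ s, q i * k i))
    + (∑ i ∈ s, p i * (1 - k i)) *
        Real.log ((∑ i ∈ s, p i * (1 - k i)) / (∑ i ∈ s, q i * (1 - k i)))
    ≤ ∑ i ∈ s, p i * Real.log (p i / q i) := by
  have cancel : ∀ c a b : ℝ, c ≠ 0 → (a * c) / (b * c) = a / b := by
    intro c a b hc
    rw [mul_div_mul_right _ _ hc]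
  have h1 := logsum s (fun i => p i * k i) (fun i => q i * k i)
    (fun i hi => mul_nonneg (hp i hi) (hk0 i hi))
    (fun i hi => mul_nonneg (hq i hi) (hk0 i hi))
    (by
      intro i hi hz
      show p i * k i = 0
      rcases mul_eq_zero.mp hz with h | h
      · rw [hpq i hi h]; ring
      · rw [h]; ring)
  have h2 := logsum s (fun i => p i * (1 - k i)) (fun i => q i * (1 - k i))
    (fun i hi => mul_nonneg (hp i hi) (by linarith [hk1 i hi]))
    (fun i hi => mul_nonneg (hq i hi) (by linarith [hk1 i hi]))
    (by
      intro i hi hz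
      show p i * (1 - k i) = 0
      rcases mul_eq_zero.mp hz with h | h
      · rw [hpq i hi h]; ring
      · rw [h]; ring)
  have e1 : ∀ i ∈ s, p i * k i * Real.log ((p i * k i) / (q i * k i))
      = p i * k i * Real.log (p i / q i) := by
    intro i hi
    rcases eq_or_ne (k i) 0 with h | h
    · rw [h]; ring_nf
    · rw [cancel _ _ _ h]
  have e2 : ∀ i ∈ s, p i * (1 - k i) * Real.log ((p i * (1 - k i)) / (q i * (1 - k i)))
      = p i * (1 - k i) * Real.log (p i / q i) := by
    intro i hi
    rcases eq_or_ne (1 - k i) 0 with h | h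
    · rw [h]; ring_nf
    · rw [cancel _ _ _ h]
  rw [Finset.sum_congr rfl e1] at h1
  rw [Finset.sum_congr rfl e2] at h2
  have : ∑ i ∈ s, p i * k i * Real.log (p i / q i)
      + ∑ i ∈ s, p i * (1 - k i) * Real.log (p i / q i)
      = ∑ i ∈ s, p i * Real.log (p i / q i) := by
    rw [← Finset.sum_add_distrib]
    apply Finset.sum_congr rfl
    intro i hi; ring
  linarith

private lemma ent_ge {a : ℝ} (h0 : 0 ≤ a) (h1 : a ≤ 1) :
    -Real.log 2 ≤ a * Real.log a + (1 - a) * Real.log (1 - a) := by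
  have key : ∀ x : ℝ, 0 ≤ x → x - 1/2 ≤ x * Real.log (2 * x) := by
    intro x hx
    rcases hx.eq_or_lt with h | h
    · rw [← h]; norm_num
    · have hl := Real.log_le_sub_one_of_pos (x := (2 * x)⁻¹) (by positivity)
      rw [Real.log_inv] at hl
      have : 1 - (2 * x)⁻¹ ≤ Real.log (2 * x) := by linarith
      have := mul_le_mul_of_nonneg_left this (le_of_lt h)
      have hinv : x * (1 - (2 * x)⁻¹) = x - 1/2 := by field_simp
      linarith [hinv ▸ this]
  have expand : ∀ x : ℝ, 0 ≤ x → x * Real.log (2 * x) = x * Real.log 2 + x * Real.log x := by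
    intro x hx
    rcases hx.eq_or_lt with h | h
    · rw [← h]; ring
    · rw [Real.log_mul (by norm_num) (ne_of_gt h)]; ring
  have k1 := key a h0
  have k2 := key (1 - a) (by linarith)
  rw [expand a h0] at k1
  rw [expand (1 - a) (by linarith)] at k2
  nlinarith [k1, k2]



/-- Generalized Fano inequality with distortion: `Z` is uniform on a finite class
of size `M`, `d` is a distance on it, `d₀ ≥ 0` a tolerance, and
`Md = max_h |{h' : d h h' ≤ d₀}|`. For any estimator `Ẑ` (kernel `R`) based on data
`X` (kernel `Q`), the probability `P_e = P[d(Ẑ,Z) > d₀]` satisfies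
`P_e ≥ 1 − (I(Z;X)+1)/(log₂ M − log₂ Md)`, assuming `log₂ M > log₂ Md`. -/
theorem stmt_5 {H X : Type*} [Fintype H] [Fintype X]
    (M : ℕ) (hM : M = Fintype.card H)
    (d : H → H → ℝ) (hd0 : ∀ h, d h h = 0) (hdsymm : ∀ h h', d h h' = d h' h)
    (d₀ : ℝ) (hd₀ : 0 ≤ d₀)
    (Md : ℕ) (hMd : Md = Finset.univ.sup (fun h : H => ({h' | d h h' ≤ d₀} : Set H).ncard))
    (Q : H → X → ℝ) (hQ : ∀ h x, 0 ≤ Q h x) (hQ1 : ∀ h, ∑ x, Q h x = 1)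
    (R : X → H → ℝ) (hR : ∀ x h, 0 ≤ R x h) (hR1 : ∀ x, ∑ h, R x h = 1)
    (hlog : Real.logb 2 Md < Real.logb 2 M)
    (Pe : ℝ) (hPe : Pe = ∑ h, ∑ x, ∑ h', ((M : ℝ))⁻¹ * Q h x * R x h' *
        (if d₀ < d h' h then 1 else 0))
    (I : ℝ) (hI : I = ∑ h, ∑ x, ((M : ℝ))⁻¹ * Q h x *
        Real.logb 2 (Q h x / (∑ h'', ((M : ℝ))⁻¹ * Q h'' x))) :
    Pe ≥ 1 - (I + 1) / (Real.logb 2 M - Real.logb 2 Md) := by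
  -- basic positivity facts
  have hMpos : 0 < M := by
    rcases Nat.eq_zero_or_pos M with h | h
    · exfalso
      have hemp : IsEmpty H := Fintype.card_eq_zero_iff.mp (by omega)
      have hMd0 : Md = 0 := by rw [hMd]; simp [Finset.univ_eq_empty]
      rw [hMd0, h] at hlog
      simp at hlog
    · exact h
  have hNe : Nonempty H := Fintype.card_pos_iff.mp (by omega)
  have hMdpos : 0 < Md := by
    obtain ⟨h0⟩ := hNe
    have hmem : h0 ∈ ({h' | d h0 h' ≤ d₀} : Set H) := by
      simp only [Set.mem_setOf_eq, hd0]; exact hd₀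
    have hpos : 0 < ({h' | d h0 h' ≤ d₀} : Set H).ncard :=
      (Set.ncard_pos (Set.toFinite _)).mpr ⟨h0, hmem⟩
    rw [hMd]
    exact lt_of_lt_of_le hpos
      (Finset.le_sup (f := fun h : H => ({h' | d h h' ≤ d₀} : Set H).ncard) (Finset.mem_univ h0))
  have hMR : (0:ℝ) < (M:ℝ) := by exact_mod_cast hMpos
  have hMdR : (0:ℝ) < (Md:ℝ) := by exact_mod_cast hMdpos
  have hMinv : (0:ℝ) < (M:ℝ)⁻¹ := by positivity
  have hMdM : (Md:ℝ) < (M:ℝ) :=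
    (Real.logb_lt_logb_iff (by norm_num : (1:ℝ) < 2) hMdR hMR).mp hlog
  -- the distributions
  set pX : X → ℝ := fun x => ∑ h'', (M:ℝ)⁻¹ * Q h'' x with hpX
  have hpXnn : ∀ x, 0 ≤ pX x := fun x =>
    Finset.sum_nonneg (fun h _ => mul_nonneg hMinv.le (hQ h x))
  have hpX1 : ∑ x, pX x = 1 := by
    rw [hpX]
    rw [Finset.sum_comm]
    have e : ∀ h : H, ∑ x, (M:ℝ)⁻¹ * Q h x = (M:ℝ)⁻¹ := by
      intro h; rw [← Finset.mul_sum, hQ1, mul_one]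
    rw [Finset.sum_congr rfl (fun h _ => e h), Finset.sum_const, Finset.card_univ, ← hM, nsmul_eq_mul]
    field_simp
  set p : H × X → ℝ := fun z => (M:ℝ)⁻¹ * Q z.1 z.2 with hp
  set q : H × X → ℝ := fun z => (M:ℝ)⁻¹ * pX z.2 with hq
  set k : H × X → ℝ := fun z => ∑ h', R z.2 h' * (if d₀ < d h' z.1 then (0:ℝ) else 1) with hk
  have hpnn : ∀ z : H × X, 0 ≤ p z := fun z => mul_nonneg hMinv.le (hQ z.1 z.2)
  have hqnn : ∀ z : H × X, 0 ≤ q z := fun z => mul_nonneg hMinv.le (hpXnn z.2)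
  have hknn : ∀ z : H × X, 0 ≤ k z := by
    intro z
    apply Finset.sum_nonneg
    intro h' _
    apply mul_nonneg (hR z.2 h')
    split <;> norm_num
  have hk1 : ∀ z : H × X, k z ≤ 1 := by
    intro z
    have hle : k z ≤ ∑ h', R z.2 h' := by
      apply Finset.sum_le_sum
      intro h' _
      have := hR z.2 h'
      split <;> nlinarith
    rw [hR1 z.2] at hle
    exact hle
  have hpq0 : ∀ z : H × X, q z = 0 → p z = 0 := by
    intro z hz
    have hpX0 : pX z.2 = 0 := by
      rcases mul_eq_zero.mp hz with h | h
      · exact absurd h (ne_of_gt hMinv)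
      · exact h
    have := (Finset.sum_eq_zero_iff_of_nonneg
      (fun h _ => mul_nonneg hMinv.le (hQ h z.2))).mp hpX0 z.1 (Finset.mem_univ z.1)
    rw [hp]
    simpa using this
  have hpsum : ∑ z : H × X, p z = 1 := by
    rw [hp, Fintype.sum_prod_type]
    have e : ∀ h : H, ∑ x, (M:ℝ)⁻¹ * Q h x = (M:ℝ)⁻¹ := by
      intro h; rw [← Finset.mul_sum, hQ1, mul_one]
    rw [Finset.sum_congr rfl (fun h _ => e h), Finset.sum_const, Finset.card_univ, ← hM, nsmul_eq_mul]
    field_simp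
  have hqsum : ∑ z : H × X, q z = 1 := by
    rw [hq, Fintype.sum_prod_type]
    have e : ∀ h : H, ∑ x, (M:ℝ)⁻¹ * pX x = (M:ℝ)⁻¹ := by
      intro h; rw [← Finset.mul_sum, hpX1, mul_one]
    rw [Finset.sum_congr rfl (fun h _ => e h), Finset.sum_const, Finset.card_univ, ← hM, nsmul_eq_mul]
    field_simp
  -- Pe identity
  have hC : ∑ z : H × X, p z * (1 - k z) = Pe := by
    rw [hPe, hp, hk, Fintype.sum_prod_type]
    apply Finset.sum_congr rfl
    intro h _
    apply Finset.sum_congr rfl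
    intro x _
    have e1 : 1 - ∑ h', R x h' * (if d₀ < d h' h then (0:ℝ) else 1)
        = ∑ h', R x h' * (if d₀ < d h' h then (1:ℝ) else 0) := by
      have hadd : (∑ h', R x h' * (if d₀ < d h' h then (0:ℝ) else 1))
          + (∑ h', R x h' * (if d₀ < d h' h then (1:ℝ) else 0)) = ∑ h', R x h' := by
        rw [← Finset.sum_add_distrib]
        apply Finset.sum_congr rfl
        intro h' _
        split <;> ring
      rw [hR1 x] at hadd
      linarith
    rw [e1, Finset.mul_sum]
    apply Finset.sum_congr rfl
    intro h' _
    ring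
  have hPenn : 0 ≤ Pe := by
    rw [← hC]
    apply Finset.sum_nonneg
    intro z _
    exact mul_nonneg (hpnn z) (by linarith [hk1 z])
  have hAC : ∑ z : H × X, p z * k z = 1 - Pe := by
    have h1 : (∑ z : H × X, p z * k z) + (∑ z : H × X, p z * (1 - k z)) = ∑ z : H × X, p z := by
      rw [← Finset.sum_add_distrib]
      apply Finset.sum_congr rfl
      intro z _
      ring
    rw [hC, hpsum] at h1
    linarith
  have hPe1 : Pe ≤ 1 := by
    have : 0 ≤ ∑ z : H × X, p z * k z :=
      Finset.sum_nonneg (fun z _ => mul_nonneg (hpnn z) (hknn z))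
    rw [hAC] at this
    linarith
  -- the B sum and its bounds
  set B : ℝ := ∑ z : H × X, q z * k z with hB
  have hD : ∑ z : H × X, q z * (1 - k z) = 1 - B := by
    have h1 : B + (∑ z : H × X, q z * (1 - k z)) = ∑ z : H × X, q z := by
      rw [hB, ← Finset.sum_add_distrib]
      apply Finset.sum_congr rfl
      intro z _
      ring
    rw [hqsum] at h1
    linarith
  have hBeq : B = ∑ x, ∑ h', (pX x * R x h') *
      ((M:ℝ)⁻¹ * ∑ h, (if d₀ < d h' h then (0:ℝ) else 1)) := by
    rw [hB, hq, hk, Fintype.sum_prod_type, Finset.sum_comm]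
    apply Finset.sum_congr rfl
    intro x _
    simp only [Finset.mul_sum]
    rw [Finset.sum_comm]
    apply Finset.sum_congr rfl
    intro h' _
    apply Finset.sum_congr rfl
    intro h _
    ring
  have hcnt1 : ∀ h' : H, (1:ℝ) ≤ ∑ h, (if d₀ < d h' h then (0:ℝ) else 1) := by
    intro h'
    have hnn : ∀ i ∈ (Finset.univ : Finset H), 0 ≤ (if d₀ < d h' i then (0:ℝ) else 1) := by
      intro i _; split <;> norm_num
    have := Finset.single_le_sum hnn (Finset.mem_univ h')
    rw [hd0 h'] at this
    rw [if_neg (not_lt.mpr hd₀)] at this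
    exact this
  have hcnt2 : ∀ h' : H, ∑ h, (if d₀ < d h' h then (0:ℝ) else 1) ≤ (Md:ℝ) := by
    intro h'
    have e : ∑ h, (if d₀ < d h' h then (0:ℝ) else 1)
        = ((Finset.univ.filter (fun h => d h' h ≤ d₀)).card : ℝ) := by
      rw [← Finset.sum_boole]
      apply Finset.sum_congr rfl
      intro h _
      by_cases hc : d₀ < d h' h
      · rw [if_pos hc, if_neg (not_le.mpr hc)]
      · rw [if_neg hc, if_pos (not_lt.mp hc)]
    rw [e]
    have e2 : ({h'' | d h' h'' ≤ d₀} : Set H).ncard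
        = (Finset.univ.filter (fun h => d h' h ≤ d₀)).card := by
      rw [Set.ncard_eq_toFinset_card']
      congr 1
      ext a
      simp
    have hle : (Finset.univ.filter (fun h => d h' h ≤ d₀)).card ≤ Md := by
      rw [hMd, ← e2]
      exact Finset.le_sup (f := fun h : H => ({h' | d h h' ≤ d₀} : Set H).ncard)
        (Finset.mem_univ h')
    exact_mod_cast hle
  have hsum1 : ∑ x, ∑ h' : H, pX x * R x h' = 1 := by
    have e : ∀ x : X, ∑ h' : H, pX x * R x h' = pX x := by
      intro x; rw [← Finset.mul_sum, hR1, mul_one]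
    rw [Finset.sum_congr rfl (fun x _ => e x), hpX1]
  have hB2 : B ≤ (Md:ℝ) / M := by
    rw [hBeq]
    calc ∑ x, ∑ h', (pX x * R x h') * ((M:ℝ)⁻¹ * ∑ h, (if d₀ < d h' h then (0:ℝ) else 1))
        ≤ ∑ x, ∑ h' : H, (pX x * R x h') * ((Md:ℝ) / M) := by
          apply Finset.sum_le_sum
          intro x _
          apply Finset.sum_le_sum
          intro h' _
          apply mul_le_mul_of_nonneg_left _ (mul_nonneg (hpXnn x) (hR x h'))
          calc (M:ℝ)⁻¹ * ∑ h, (if d₀ < d h' h then (0:ℝ) else 1)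
              ≤ (M:ℝ)⁻¹ * (Md:ℝ) := by
                apply mul_le_mul_of_nonneg_left (hcnt2 h') hMinv.le
            _ = (Md:ℝ) / M := by field_simp
      _ = (Md:ℝ) / M := by
          simp only [← Finset.sum_mul]
          rw [hsum1, one_mul]
  have hB1 : (M:ℝ)⁻¹ ≤ B := by
    rw [hBeq]
    calc (M:ℝ)⁻¹ = (∑ x, ∑ h' : H, pX x * R x h') * (M:ℝ)⁻¹ := by rw [hsum1, one_mul]
      _ = ∑ x, ∑ h' : H, (pX x * R x h') * (M:ℝ)⁻¹ := by
          simp only [← Finset.sum_mul]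
      _ ≤ ∑ x, ∑ h', (pX x * R x h') * ((M:ℝ)⁻¹ * ∑ h, (if d₀ < d h' h then (0:ℝ) else 1)) := by
          apply Finset.sum_le_sum
          intro x _
          apply Finset.sum_le_sum
          intro h' _
          apply mul_le_mul_of_nonneg_left _ (mul_nonneg (hpXnn x) (hR x h'))
          calc (M:ℝ)⁻¹ = (M:ℝ)⁻¹ * 1 := by ring
            _ ≤ (M:ℝ)⁻¹ * ∑ h, (if d₀ < d h' h then (0:ℝ) else 1) :=
              mul_le_mul_of_nonneg_left (hcnt1 h') hMinv.le
  have hBpos : 0 < B := lt_of_lt_of_le hMinv hB1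
  have hBlt1 : B < 1 := lt_of_le_of_lt hB2 (by rw [div_lt_one hMR]; exact hMdM)
  -- mutual information identity
  have hS : ∑ z : H × X, p z * Real.log (p z / q z) = I * Real.log 2 := by
    rw [hI, hp, hq, Fintype.sum_prod_type]
    rw [Finset.sum_mul]
    apply Finset.sum_congr rfl
    intro h _
    rw [Finset.sum_mul]
    apply Finset.sum_congr rfl
    intro x _
    have e1 : (M:ℝ)⁻¹ * Q h x / ((M:ℝ)⁻¹ * pX x) = Q h x / pX x :=
      mul_div_mul_left _ _ (ne_of_gt hMinv)
    rw [e1]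
    have hlog2ne : Real.log 2 ≠ 0 := ne_of_gt (Real.log_pos (by norm_num))
    have e0 : (∑ h'' : H, (M:ℝ)⁻¹ * Q h'' x) = pX x := rfl
    conv_rhs => rw [e0, Real.logb, mul_assoc, div_mul_cancel₀ _ hlog2ne]
  -- apply the data processing inequality
  have hDPI := dpi_binary Finset.univ p q k (fun z _ => hpnn z) (fun z _ => hqnn z)
    (fun z _ => hpq0 z) (fun z _ => hknn z) (fun z _ => hk1 z)
  rw [hAC, hC, hD, hS, ← hB] at hDPI
  -- split the logs
  have hsplit : ∀ u w : ℝ, w ≠ 0 → u * Real.log (u / w) = u * Real.log u - u * Real.log w := by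
    intro u w hw
    rcases eq_or_ne u 0 with h | h
    · simp [h]
    · rw [Real.log_div h hw]; ring
  rw [hsplit (1 - Pe) B (ne_of_gt hBpos), hsplit Pe (1 - B) (by linarith)] at hDPI
  have hent := ent_ge (a := 1 - Pe) (by linarith) (by linarith)
  rw [show (1:ℝ) - (1 - Pe) = Pe by ring] at hent
  have hlogB : Real.log B ≤ Real.log (Md:ℝ) - Real.log (M:ℝ) := by
    have := Real.log_le_log hBpos hB2
    rwa [Real.log_div (ne_of_gt hMdR) (ne_of_gt hMR)] at this
  have hlogBm : (1 - Pe) * Real.log B ≤ (1 - Pe) * (Real.log (Md:ℝ) - Real.log (M:ℝ)) :=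
    mul_le_mul_of_nonneg_left hlogB (by linarith)
  have hlog1B : Pe * Real.log (1 - B) ≤ 0 :=
    mul_nonpos_of_nonneg_of_nonpos hPenn (Real.log_nonpos (by linarith) (by linarith))
  have hlog2 : 0 < Real.log 2 := Real.log_pos (by norm_num)
  -- combine
  have hmain : (1 - Pe) * (Real.log (M:ℝ) - Real.log (Md:ℝ)) ≤ (I + 1) * Real.log 2 := by
    nlinarith [hDPI, hent, hlogBm, hlog1B]
  have hLM : Real.logb 2 (M:ℝ) - Real.logb 2 (Md:ℝ)
      = (Real.log (M:ℝ) - Real.log (Md:ℝ)) / Real.log 2 := by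
    rw [Real.logb, Real.logb]
    ring
  have hL : 0 < Real.logb 2 (M:ℝ) - Real.logb 2 (Md:ℝ) := sub_pos.mpr hlog
  have hkey : (1 - Pe) * (Real.logb 2 (M:ℝ) - Real.logb 2 (Md:ℝ)) ≤ I + 1 := by
    rw [hLM]
    rw [← mul_div_assoc, div_le_iff₀ hlog2]
    linarith
  have : 1 - Pe ≤ (I + 1) / (Real.logb 2 (M:ℝ) - Real.logb 2 (Md:ℝ)) :=
    (le_div_iff₀ hL).mpr hkey
  linarith
end

section
/- Let 𝒟 be a finite set, and for each pair (i,z) ∈ 𝒟 with i a size-w subset of [N] and z ∈ {0,1}^w, let p_{i,z} ≥ 0 be a probability distribution (Σ p_{i,z} = 1) satisfying (1−ε')/D ≤ p_{i,z} ≤ (1+ε')/D, where D = |𝒟| is even and 0 ≤ ε' < 1. Then the extremal points of this convex polytope of distributions are exactly the distributions p^A indexed by subsets A ⊂ 𝒟 of cardinality D/2, defined by p^A_{i,z} = (1+ε')/D if (i,z) ∈ A and p^A_{i,z} = (1−ε')/D otherwise. -/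
/-- The data space `𝒟`: a size-`w` subset `i` of `[N]` together with a binary
labeling of its elements (so `|𝒟| = C(N,w)·2^w`). -/
abbrev UserData (N w : ℕ) :=
  Σ i : {s : Finset (Fin N) // s.card = w}, ({x : Fin N // x ∈ i.1} → Bool)

open Finset

private lemma comb_le {c d u v b : ℝ} (hc : 0 < c) (hd : 0 < d) (hcd : c + d = 1)
    (hu : u ≤ b) (hv : v ≤ b) (h : c * u + d * v = b) : u = b ∧ v = b := by
  constructor
  · by_contra h'
    have hub : u < b := lt_of_le_of_ne hu h'
    have h1 := mul_lt_mul_of_pos_left hub hc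
    have h2 := mul_le_mul_of_nonneg_left hv hd.le
    have h3 : c * b + d * b = b := by linear_combination b * hcd
    linarith
  · by_contra h'
    have hub : v < b := lt_of_le_of_ne hv h'
    have h1 := mul_lt_mul_of_pos_left hub hd
    have h2 := mul_le_mul_of_nonneg_left hu hc.le
    have h3 : c * b + d * b = b := by linear_combination b * hcd
    linarith

private lemma comb_ge {c d u v a : ℝ} (hc : 0 < c) (hd : 0 < d) (hcd : c + d = 1)
    (hu : a ≤ u) (hv : a ≤ v) (h : c * u + d * v = a) : u = a ∧ v = a := by
  constructor
  · by_contra h'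
    have hub : a < u := lt_of_le_of_ne hu (Ne.symm h')
    have h1 := mul_lt_mul_of_pos_left hub hc
    have h2 := mul_le_mul_of_nonneg_left hv hd.le
    have h3 : c * a + d * a = a := by linear_combination a * hcd
    linarith
  · by_contra h'
    have hub : a < v := lt_of_le_of_ne hv (Ne.symm h')
    have h1 := mul_lt_mul_of_pos_left hub hd
    have h2 := mul_le_mul_of_nonneg_left hu hc.le
    have h3 : c * a + d * a = a := by linear_combination a * hcd
    linarith

private lemma sum_ite_const {ι : Type*} [Fintype ι] [DecidableEq ι] (A : Finset ι) (b a : ℝ) :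
    ∑ n : ι, (if n ∈ A then b else a) = A.card * b + Aᶜ.card * a := by
  rw [Finset.sum_ite, Finset.sum_const, Finset.sum_const]
  simp [Finset.filter_mem_eq_inter, mul_comm, Finset.compl_eq_univ_sdiff, Finset.filter_not]

private lemma key {ι : Type*} [Fintype ι] [Nonempty ι] [DecidableEq ι]
    (ε' : ℝ) (hε0 : 0 ≤ ε') (hε1 : ε' < 1)
    (D : ℕ) (hD : D = Fintype.card ι) (hDeven : Even D) :
    Set.extremePoints ℝ
        {p : ι → ℝ |
          (∀ n, 0 ≤ p n) ∧ (∑ n, p n = 1) ∧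
          ∀ n, (1 - ε') / D ≤ p n ∧ p n ≤ (1 + ε') / D} =
      {p : ι → ℝ |
        ∃ A : Finset ι, 2 * A.card = D ∧
          ∀ n, p n = if n ∈ A then (1 + ε') / D else (1 - ε') / D} := by
  classical
  have hDpos : 0 < D := hD ▸ Fintype.card_pos
  have hDR : (0:ℝ) < D := by exact_mod_cast hDpos
  have hDne : (D:ℝ) ≠ 0 := ne_of_gt hDR
  set a : ℝ := (1 - ε') / D with ha
  set b : ℝ := (1 + ε') / D with hb
  have haD : (D:ℝ) * a = 1 - ε' := by rw [ha]; field_simp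
  have hbD : (D:ℝ) * b = 1 + ε' := by rw [hb]; field_simp
  have ha0 : 0 ≤ a := div_nonneg (by linarith) hDR.le
  have hb0 : 0 ≤ b := div_nonneg (by linarith) hDR.le
  have hab : a ≤ b := by
    rw [ha, hb, div_le_div_iff₀ hDR hDR]
    nlinarith
  ext p
  simp only [Set.mem_setOf_eq, mem_extremePoints]
  constructor
  · rintro ⟨⟨hpos, hsum, hbd⟩, hext⟩
    -- Step 1: every coordinate is a or b
    have hvals : ∀ n, p n = a ∨ p n = b := by
      by_contra hcon
      push_neg at hcon
      obtain ⟨m, hm1, hm2⟩ := hcon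
      have hma : a < p m := lt_of_le_of_ne (hbd m).1 (Ne.symm hm1)
      have hmb : p m < b := lt_of_le_of_ne (hbd m).2 hm2
      have hεpos : 0 < ε' := by
        rcases hε0.lt_or_eq with h | h
        · exact h
        · exfalso
          have hlt : a < b := lt_trans hma hmb
          rw [ha, hb, ← h] at hlt; linarith
      -- there is a second interior coordinate
      have hex : ∃ m', m' ≠ m ∧ a < p m' ∧ p m' < b := by
        by_contra h'
        push_neg at h'
        have h2 : ∀ n, n ≠ m → p n = a ∨ p n = b := by
          intro n hn
          rcases eq_or_lt_of_le (hbd n).1 with h | h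
          · exact Or.inl h.symm
          · exact Or.inr (le_antisymm (hbd n).2 (h' n hn h))
        set T := (univ : Finset ι).erase m with hT
        set B := T.filter (fun n => p n = b) with hB
        set C := T.filter (fun n => ¬ p n = b) with hC
        set k := B.card with hk
        set j := C.card with hj
        have hkjD : k + j + 1 = D := by
          have h1 : k + j = T.card := by
            rw [hk, hj, hB, hC]; exact Finset.card_filter_add_card_filter_not _
          have h2 : T.card = Fintype.card ι - 1 := by
            rw [hT, Finset.card_erase_of_mem (mem_univ m), Finset.card_univ]
          rw [h1, h2]; omega
        have hkjR : (k:ℝ) + j + 1 = D := by exact_mod_cast hkjD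
        have hsum' : p m + ((k:ℝ) * b + (j:ℝ) * a) = 1 := by
          have e1 : ∑ n ∈ B, p n = (k:ℝ) * b :=
            calc ∑ n ∈ B, p n = ∑ _n ∈ B, b :=
                  Finset.sum_congr rfl (fun n hn => (Finset.mem_filter.mp hn).2)
              _ = (k:ℝ) * b := by rw [Finset.sum_const, nsmul_eq_mul]
          have e2 : ∑ n ∈ C, p n = (j:ℝ) * a :=
            calc ∑ n ∈ C, p n = ∑ _n ∈ C, a :=
                  Finset.sum_congr rfl (fun n hn => by
                    have hn' := Finset.mem_filter.mp hn
                    have hnm : n ≠ m := (Finset.mem_erase.mp hn'.1).1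
                    rcases h2 n hnm with h | h
                    · exact h
                    · exact absurd h hn'.2)
              _ = (j:ℝ) * a := by rw [Finset.sum_const, nsmul_eq_mul]
          have e3 : ∑ n ∈ B, p n + ∑ n ∈ C, p n = ∑ n ∈ T, p n :=
            Finset.sum_filter_add_sum_filter_not T _ p
          have e4 : ∑ n ∈ T, p n + p m = 1 := by
            rw [hT, Finset.sum_erase_add _ _ (mem_univ m)]; exact hsum
          rw [e1, e2] at e3; linarith
        have e5 : ε' * ((k:ℝ) - j) = 1 - (D:ℝ) * p m := by
          linear_combination (D:ℝ) * hsum' - (k:ℝ) * hbD - (j:ℝ) * haD - hkjR +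
            hkjR * 0
        have h6 : ε' * ((k:ℝ) - j) < ε' * 1 := by
          have : (D:ℝ) * a < D * p m := by
            exact (mul_lt_mul_iff_right₀ hDR).mpr hma
          rw [haD] at this; rw [e5, mul_one]; linarith
        have h7 : ε' * (-1 : ℝ) < ε' * ((k:ℝ) - j) := by
          have : (D:ℝ) * p m < D * b := (mul_lt_mul_iff_right₀ hDR).mpr hmb
          rw [hbD] at this; rw [e5]; linarith
        have h8 : (k:ℝ) - j < 1 := by
          have := (mul_lt_mul_iff_right₀ hεpos).mp h6; linarith
        have h9 : (-1:ℝ) < (k:ℝ) - j := by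
          have := (mul_lt_mul_iff_right₀ hεpos).mp h7; linarith
        have hkj : k = j := by
          rcases lt_trichotomy k j with h | h | h
          · exfalso
            have : (k:ℝ) + 1 ≤ j := by exact_mod_cast Nat.succ_le_of_lt h
            linarith
          · exact h
          · exfalso
            have : (j:ℝ) + 1 ≤ k := by exact_mod_cast Nat.succ_le_of_lt h
            linarith
        obtain ⟨r, hr⟩ := hDeven
        omega
      obtain ⟨m', hm'm, hm'a, hm'b⟩ := hex
      set t : ℝ := min (min (b - p m) (p m - a)) (min (b - p m') (p m' - a)) with htdef
      have ht : 0 < t := by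
        simp only [htdef, lt_min_iff]
        refine ⟨⟨?_, ?_⟩, ?_, ?_⟩ <;> linarith
      have ht1 : t ≤ b - p m := le_trans (min_le_left _ _) (min_le_left _ _)
      have ht2 : t ≤ p m - a := le_trans (min_le_left _ _) (min_le_right _ _)
      have ht3 : t ≤ b - p m' := le_trans (min_le_right _ _) (min_le_left _ _)
      have ht4 : t ≤ p m' - a := le_trans (min_le_right _ _) (min_le_right _ _)
      set q1 : ι → ℝ := fun n => p n + (if n = m then t else 0) - (if n = m' then t else 0) with hq1
      set q2 : ι → ℝ := fun n => p n - (if n = m then t else 0) + (if n = m' then t else 0) with hq2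
      have hbq : ∀ n, (a ≤ q1 n ∧ q1 n ≤ b) ∧ (a ≤ q2 n ∧ q2 n ≤ b) := by
        intro n
        rcases eq_or_ne n m with rfl | hnm
        · have hne : n ≠ m' := Ne.symm hm'm
          refine ⟨⟨?_, ?_⟩, ?_, ?_⟩ <;> simp [hq1, hq2, hne] <;> linarith
        · rcases eq_or_ne n m' with rfl | hnm'
          · refine ⟨⟨?_, ?_⟩, ?_, ?_⟩ <;> simp [hq1, hq2, hnm] <;> linarith
          · refine ⟨⟨?_, ?_⟩, ?_, ?_⟩ <;> simp [hq1, hq2, hnm, hnm'] <;>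
              linarith [(hbd n).1, (hbd n).2]
      have hsq : ∀ q : ι → ℝ, (∀ n, a ≤ q n ∧ q n ≤ b) → (∑ n, q n = 1) →
          ((∀ n, 0 ≤ q n) ∧ (∑ n, q n = 1) ∧ ∀ n, a ≤ q n ∧ q n ≤ b) := by
        intro q hq hs
        exact ⟨fun n => le_trans ha0 (hq n).1, hs, hq⟩
      have hsum1 : ∑ n, q1 n = 1 := by
        simp only [hq1]
        rw [Finset.sum_sub_distrib, Finset.sum_add_distrib]
        simp [hsum, Finset.sum_ite_eq']
      have hsum2 : ∑ n, q2 n = 1 := by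
        simp only [hq2]
        rw [Finset.sum_add_distrib, Finset.sum_sub_distrib]
        simp [hsum, Finset.sum_ite_eq']
      have hmem1 := hsq q1 (fun n => (hbq n).1) hsum1
      have hmem2 := hsq q2 (fun n => (hbq n).2) hsum2
      have hseg : p ∈ openSegment ℝ q1 q2 := by
        refine ⟨1/2, 1/2, by norm_num, by norm_num, by norm_num, ?_⟩
        funext n
        simp only [Pi.add_apply, Pi.smul_apply, smul_eq_mul, hq1, hq2]
        ring
      have := (hext q1 hmem1 q2 hmem2 hseg).1
      have hcontra := congrFun this m
      have hmm' : m ≠ m' := fun h => hm'm h.symm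
      simp [hq1, hmm'] at hcontra
      linarith
    -- Step 2: build the set A
    rcases hε0.eq_or_lt with hz | hεp
    · -- ε' = 0
      obtain ⟨A, _, hAcard⟩ := Finset.exists_subset_card_eq
        (show D / 2 ≤ (univ : Finset ι).card by rw [Finset.card_univ, ← hD]; omega)
      refine ⟨A, by obtain ⟨r, hr⟩ := hDeven; omega, fun n => ?_⟩
      have hab' : a = b := by rw [ha, hb, ← hz]; norm_num
      rcases hvals n with h | h <;> rw [h] <;> split_ifs <;> simp [hab']
    · -- ε' > 0
      set A := (univ : Finset ι).filter (fun n => p n = b) with hA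
      have hpA : ∀ n, p n = if n ∈ A then b else a := by
        intro n
        by_cases h : n ∈ A
        · rw [if_pos h]; rw [hA, Finset.mem_filter] at h; exact h.2
        · rw [if_neg h]
          rcases hvals n with h' | h'
          · exact h'
          · exact absurd (by rw [hA, Finset.mem_filter]; exact ⟨mem_univ n, h'⟩) h
      refine ⟨A, ?_, hpA⟩
      have hsum'' : (A.card : ℝ) * b + (Aᶜ.card : ℝ) * a = 1 := by
        rw [← sum_ite_const A b a, ← Finset.sum_congr rfl (fun n _ => hpA n)]
        exact hsum
      have hcc : A.card + Aᶜ.card = D := by rw [Finset.card_add_card_compl, hD]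
      have hccR : (A.card : ℝ) + Aᶜ.card = D := by exact_mod_cast hcc
      have e5 : ε' * ((A.card:ℝ) - Aᶜ.card) = 0 := by
        linear_combination (D:ℝ) * hsum'' - (A.card:ℝ) * hbD - (Aᶜ.card:ℝ) * haD -
          hccR
      have : (A.card:ℝ) - Aᶜ.card = 0 := by
        rcases mul_eq_zero.mp e5 with h | h
        · exact absurd h (ne_of_gt hεp)
        · exact h
      have : A.card = Aᶜ.card := by
        have : (A.card:ℝ) = Aᶜ.card := by linarith
        exact_mod_cast this
      omega
  · rintro ⟨A, hAcard, hAp⟩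
    have hccA : A.card + Aᶜ.card = D := by rw [Finset.card_add_card_compl, hD]
    have hAc : Aᶜ.card = A.card := by omega
    refine ⟨⟨fun n => ?_, ?_, fun n => ?_⟩, ?_⟩
    · rw [hAp n]; split_ifs
      · exact hb0
      · exact ha0
    · rw [Finset.sum_congr rfl (fun n _ => hAp n), sum_ite_const, hAc]
      have h2k : 2 * (A.card : ℝ) = D := by exact_mod_cast hAcard
      rw [ha, hb]; field_simp; linarith
    · rw [hAp n]; constructor <;> split_ifs <;> first | exact le_refl _ | exact hab
    · intro x1 hx1 x2 hx2 hseg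
      obtain ⟨c, d, hc, hd, hcd, hcomb⟩ := hseg
      have hkey : ∀ n, x1 n = p n ∧ x2 n = p n := by
        intro n
        have hc1 : c * x1 n + d * x2 n = p n := by
          have := congrFun hcomb n
          simpa using this
        rw [hAp n] at hc1 ⊢
        by_cases hn : n ∈ A
        · rw [if_pos hn] at hc1 ⊢
          exact comb_le hc hd hcd (hx1.2.2 n).2 (hx2.2.2 n).2 hc1
        · rw [if_neg hn] at hc1 ⊢
          exact comb_ge hc hd hcd (hx1.2.2 n).1 (hx2.2.2 n).1 hc1
      exact ⟨funext fun n => (hkey n).1, funext fun n => (hkey n).2⟩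

/-- The extremal points of the polytope of probability distributions `p` on `𝒟`
with `(1−ε')/D ≤ p_n ≤ (1+ε')/D` (where `D = |𝒟|` is even, `0 ≤ ε' < 1`) are
exactly the distributions taking value `(1+ε')/D` on a subset `A` of cardinality
`D/2` and `(1−ε')/D` elsewhere. -/
theorem stmt_11 (N w : ℕ) (hw : 1 ≤ w) (hwN : w ≤ N)
    (ε' : ℝ) (hε0 : 0 ≤ ε') (hε1 : ε' < 1)
    (D : ℕ) (hD : D = Fintype.card (UserData N w)) (hDeven : Even D) :
    Set.extremePoints ℝ
        {p : UserData N w → ℝ |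
          (∀ n, 0 ≤ p n) ∧ (∑ n, p n = 1) ∧
          ∀ n, (1 - ε') / D ≤ p n ∧ p n ≤ (1 + ε') / D} =
      {p : UserData N w → ℝ |
        ∃ A : Finset (UserData N w), 2 * A.card = D ∧
          ∀ n, p n = if n ∈ A then (1 + ε') / D else (1 - ε') / D} := by
  have hne : Nonempty (UserData N w) := by
    obtain ⟨s, _, hcard⟩ := Finset.exists_subset_card_eq
      (show w ≤ (univ : Finset (Fin N)).card by simpa using hwN)
    exact ⟨⟨⟨s, hcard⟩, fun _ => false⟩⟩
  exact key ε' hε0 hε1 D hD hDeven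
end
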